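/- Let d ≥ 1, ρ a bipartite density operator on ℂ^d ⊗ ℂ^d, and ε > 0. Suppose τ is a bipartite density operator with entanglement fraction F(τ) := ⟨φ⁺|τ|φ⁺⟩ ≥ 1 − ε(d+1)/(4d), supp(ρ) ⊆ supp(τ), and k := D_max(ρ‖τ). If n ≥ 2^{k+2} d / (ε(d+1)), then the state ρ^{(n)} := (1/n)ρ + ((n−1)/n)τ satisfies F(ρ^{(n)}) ≥ 1 − ε(d+1)/d. -/

import Mathlib

open Classical

open Matrix
open scoped ComplexOrder

noncomputable def msqrt {n : Type*} [Fintype n] [DecidableEq n] (A : Matrix n n ℂ) :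
    Matrix n n ℂ :=
  if h : A.PosSemidef then (h.1.eigenvectorUnitary : Matrix n n ℂ) *
    diagonal ((↑) ∘ (Real.sqrt ·) ∘ h.1.eigenvalues) * (star h.1.eigenvectorUnitary : Matrix n n ℂ)
  else 0

/-- Uhlmann fidelity F_U(ρ,σ) = (Tr √(√σ ρ √σ))². -/
noncomputable def uFid {n : Type*} [Fintype n] [DecidableEq n] (ρ σ : Matrix n n ℂ) : ℝ :=
  ((msqrt (msqrt σ * ρ * msqrt σ)).trace.re) ^ 2

/-- Purified distance. -/
noncomputable def pDist {n : Type*} [Fintype n] [DecidableEq n] (ρ σ : Matrix n n ℂ) : ℝ :=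
  Real.sqrt (1 - uFid ρ σ)

def IsDensity {n : Type*} [Fintype n] [DecidableEq n] (ρ : Matrix n n ℂ) : Prop :=
  ρ.PosSemidef ∧ ρ.trace = 1

noncomputable def Dmax {n : Type*} [Fintype n] [DecidableEq n] (ρ σ : Matrix n n ℂ) : ℝ :=
  sInf {l : ℝ | (((2 : ℝ) ^ l) • σ - ρ).PosSemidef}

/-- The maximally entangled vector on `ℂ^d ⊗ ℂ^d`. -/
noncomputable def maxEnt (d : ℕ) : (Fin d × Fin d) → ℂ :=
  fun p => if p.1 = p.2 then ((1 / Real.sqrt d : ℝ) : ℂ) else 0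

/-- Entanglement fraction F(σ) = ⟨φ⁺|σ|φ⁺⟩. -/
noncomputable def entFrac {d : ℕ} (σ : Matrix (Fin d × Fin d) (Fin d × Fin d) ℂ) : ℝ :=
  (star (maxEnt d) ⬝ᵥ σ *ᵥ maxEnt d).re

/-- The maximally entangled state |φ⁺⟩⟨φ⁺|. -/
noncomputable def maxEntOp (d : ℕ) : Matrix (Fin d × Fin d) (Fin d × Fin d) ℂ :=
  vecMulVec (maxEnt d) (star (maxEnt d))

private lemma trace_re_nonneg' {m : Type*} [Fintype m] [DecidableEq m]
    {M : Matrix m m ℂ} (h : M.PosSemidef) : 0 ≤ M.trace.re := by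
  have h1 : ∀ i, 0 ≤ (M i i).re := fun i => by
    have := h.re_dotProduct_nonneg (Pi.single i 1)
    simpa [dotProduct, mulVec, Pi.single_apply] using this
  rw [Matrix.trace, Complex.re_sum]
  exact Finset.sum_nonneg fun i _ => h1 i

private lemma entFrac_lin {d : ℕ} (a b : ℝ) (ρ τ : Matrix (Fin d × Fin d) (Fin d × Fin d) ℂ) :
    entFrac (a • ρ + b • τ) = a * entFrac ρ + b * entFrac τ := by
  simp [entFrac, add_mulVec, smul_mulVec, dotProduct_add, dotProduct_smul,
    Complex.real_smul, Complex.add_re, Complex.mul_re]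

private lemma entFrac_nonneg' {d : ℕ} {σ : Matrix (Fin d × Fin d) (Fin d × Fin d) ℂ}
    (h : σ.PosSemidef) : 0 ≤ entFrac σ :=
  h.re_dotProduct_nonneg (maxEnt d)

private lemma Dmax_nonneg {m : Type*} [Fintype m] [DecidableEq m]
    {ρ τ : Matrix m m ℂ} (hρ : IsDensity ρ) (hτ : IsDensity τ) : 0 ≤ Dmax ρ τ := by
  apply Real.sInf_nonneg
  intro l hl
  by_contra hneg
  push_neg at hneg
  have hlt : (2 : ℝ) ^ l < 1 := Real.rpow_lt_one_of_one_lt_of_neg one_lt_two hneg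
  have htr : 0 ≤ ((((2 : ℝ) ^ l) • τ - ρ).trace).re := trace_re_nonneg' hl
  rw [Matrix.trace_sub, Matrix.trace_smul, hρ.2, hτ.2] at htr
  simp only [Complex.sub_re, Complex.one_re, Complex.real_smul, Complex.mul_re,
    Complex.ofReal_re, Complex.ofReal_im, Complex.one_im] at htr
  linarith

theorem convex_split_entanglement_fraction {d : ℕ} (hd : 1 ≤ d)
    (ρ τ : Matrix (Fin d × Fin d) (Fin d × Fin d) ℂ)
    (hρ : IsDensity ρ) (hτ : IsDensity τ) (ε : ℝ) (hε : 0 < ε)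
    (hF : entFrac τ ≥ 1 - ε * (d + 1) / (4 * d))
    (hsupp : LinearMap.range (Matrix.toLin' ρ) ≤ LinearMap.range (Matrix.toLin' τ))
    (k : ℝ) (hk : k = Dmax ρ τ)
    (n : ℕ) (hn : (n : ℝ) ≥ 2 ^ (k + 2) * d / (ε * (d + 1))) :
    entFrac (((n : ℝ))⁻¹ • ρ + (((n : ℝ) - 1) / n) • τ) ≥ 1 - ε * (d + 1) / d := by
  have hd0 : (0 : ℝ) < d := by exact_mod_cast hd
  set a : ℝ := ε * (d + 1) / (4 * d) with ha
  have ha0 : 0 < a := by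
    apply div_pos (by positivity) (by positivity)
  have hk0 : 0 ≤ k := hk ▸ Dmax_nonneg hρ hτ
  have h4 : (4 : ℝ) ≤ 2 ^ (k + 2) := by
    have : (2 : ℝ) ^ (2 : ℝ) ≤ 2 ^ (k + 2) :=
      Real.rpow_le_rpow_of_exponent_le one_le_two (by linarith)
    calc (4 : ℝ) = 2 ^ (2 : ℝ) := by
          rw [show (2 : ℝ) = ((2 : ℕ) : ℝ) by norm_num, Real.rpow_natCast]; norm_num
      _ ≤ _ := this
  have hna : (n : ℝ) ≥ 1 / a := by
    have : 2 ^ (k + 2) * d / (ε * (d + 1)) = 2 ^ (k + 2) / 4 * (1 / a) := by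
      field_simp [ha]
      rw [ha]; field_simp
    rw [this] at hn
    have h1a : 0 < 1 / a := by positivity
    nlinarith [hn, h4, h1a]
  have hn0 : (0 : ℝ) < n := lt_of_lt_of_le (by positivity) hna
  have hinva : 1 / (n : ℝ) ≤ a := by
    rw [div_le_iff₀ hn0]
    rw [ge_iff_le, div_le_iff₀ ha0, mul_comm] at hna
    linarith
  -- evaluate entFrac of the mixture
  rw [entFrac_lin]
  have hρF : 0 ≤ entFrac ρ := entFrac_nonneg' hρ.1
  have hτF : 0 ≤ entFrac τ := entFrac_nonneg' hτ.1
  have hεd : ε * (d + 1) / d = 4 * a := by field_simp [ha]; rw [ha]; field_simp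
  rw [hεd]
  have hcoef : ((n : ℝ) - 1) / n = 1 - 1 / n := by field_simp
  have hn1 : (1 : ℝ) ≤ n := by
    have : (1 : ℕ) ≤ n := by
      by_contra h
      push_neg at h
      interval_cases n
      simp at hn0
    exact_mod_cast this
  by_cases hcase : a < 1
  · -- main case: use Fτ ≥ 1 - a
    have h1 : ((n : ℝ) - 1) / n * entFrac τ ≥ ((n : ℝ) - 1) / n * (1 - a) := by
      apply mul_le_mul_of_nonneg_left (by linarith [hF]) _
      apply div_nonneg (by linarith) (le_of_lt hn0)
    have h2 : ((n : ℝ) - 1) / n * (1 - a) = (1 - a) - (1 - a) * (1 / n) := by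
      rw [hcoef]; ring
    have h3 : (1 - a) * (1 / n) ≤ 1 / n := by
      have : 0 ≤ 1 / (n : ℝ) := by positivity
      nlinarith
    have h4' : 0 ≤ ((n : ℝ))⁻¹ * entFrac ρ := by
      apply mul_nonneg (by positivity) hρF
    nlinarith
  · -- degenerate case: 1 - 4a < 0 ≤ entFrac
    push_neg at hcase
    have h4' : 0 ≤ ((n : ℝ))⁻¹ * entFrac ρ := mul_nonneg (by positivity) hρF
    have h5 : 0 ≤ ((n : ℝ) - 1) / n * entFrac τ :=
      mul_nonneg (div_nonneg (by linarith) (le_of_lt hn0)) hτF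
    nlinarith
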